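/- Let α > 2 and A > 0, and let f(t) = A·t^α. Then the double integral ∫₁^∞ ∫_t^∞ (r/t)·e^{f(t) − f(r)} dr dt is finite. -/

import Mathlib

open MeasureTheory Set Filter Topology

/-- Exact value of the inner integral: `∫_t^∞ Aα r^{α-1} e^{A t^α - A r^α} dr = 1`. -/
lemma aux_inner (α A t : ℝ) (hα : 0 < α) (hA : 0 < A) (ht : 0 < t) :
    ∫⁻ r in Ioi t,
      ENNReal.ofReal (A * α * r ^ (α - 1) * Real.exp (A * t ^ α - A * r ^ α)) = 1 := by
  set g : ℝ → ℝ := fun r => A * α * r ^ (α - 1) * Real.exp (A * t ^ α - A * r ^ α) with hgdef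
  set G : ℝ → ℝ := fun r => -Real.exp (A * t ^ α - A * r ^ α) with hGdef
  have hderiv : ∀ r ∈ Ici t, HasDerivAt G (g r) r := by
    intro r hr
    have hr0 : r ≠ 0 := ne_of_gt (lt_of_lt_of_le ht hr)
    have hrpow : HasDerivAt (fun x : ℝ => x ^ α) (α * r ^ (α - 1)) r :=
      Real.hasDerivAt_rpow_const (Or.inl hr0)
    have hu : HasDerivAt (fun x : ℝ => A * t ^ α - A * x ^ α)
        (-(A * (α * r ^ (α - 1)))) r := by
      simpa using (hrpow.const_mul A).const_sub (A * t ^ α)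
    have hexp := hu.exp
    have : HasDerivAt G (-(Real.exp (A * t ^ α - A * r ^ α) * -(A * (α * r ^ (α - 1))))) r :=
      hexp.neg
    convert this using 1
    simp only [hgdef]
    ring
  have hpos : ∀ r ∈ Ioi t, 0 ≤ g r := by
    intro r hr
    have hrpos : (0:ℝ) < r := lt_trans ht hr
    have : (0:ℝ) < r ^ (α - 1) := Real.rpow_pos_of_pos hrpos _
    positivity
  have htend : Tendsto G atTop (𝓝 0) := by
    have h1 : Tendsto (fun r : ℝ => r ^ α) atTop atTop := tendsto_rpow_atTop hα
    have h2 : Tendsto (fun r : ℝ => A * r ^ α) atTop atTop := h1.const_mul_atTop hA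
    have h3 : Tendsto (fun r : ℝ => A * t ^ α - A * r ^ α) atTop atBot := by
      simpa [sub_eq_add_neg] using
        tendsto_atBot_add_const_left atTop (A * t ^ α)
          (tendsto_neg_atTop_atBot.comp h2)
    have h4 : Tendsto (fun r : ℝ => Real.exp (A * t ^ α - A * r ^ α)) atTop (𝓝 0) :=
      Real.tendsto_exp_atBot.comp h3
    simpa [hGdef] using h4.neg
  have hint : IntegrableOn g (Ioi t) := integrableOn_Ioi_deriv_of_nonneg' hderiv hpos htend
  have hval : ∫ r in Ioi t, g r = 0 - G t :=
    integral_Ioi_of_hasDerivAt_of_nonneg' hderiv hpos htend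
  have hnn : 0 ≤ᵐ[volume.restrict (Ioi t)] g :=
    (ae_restrict_iff' measurableSet_Ioi).2 (ae_of_all _ hpos)
  rw [← ofReal_integral_eq_lintegral_ofReal hint hnn, hval]
  simp [hGdef]

/-- For `α > 2`, `A > 0`, `f t = A t^α`, the double integral
`∫₁^∞ ∫_t^∞ (r/t) e^{f t - f r} dr dt` is finite. -/
theorem double_integral_finite (α A : ℝ) (hα : 2 < α) (hA : 0 < A) :
    (∫⁻ t in Ioi (1:ℝ), ∫⁻ r in Ioi t,
        ENNReal.ofReal ((r / t) * Real.exp (A * t ^ α - A * r ^ α))) < ⊤ := by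
  have hα0 : (0:ℝ) < α := by linarith
  have hAα : (0:ℝ) < A * α := mul_pos hA hα0
  -- Step 1: bound the whole integral by an integral of a power function
  have step1 : (∫⁻ t in Ioi (1:ℝ), ∫⁻ r in Ioi t,
        ENNReal.ofReal ((r / t) * Real.exp (A * t ^ α - A * r ^ α)))
      ≤ ∫⁻ t in Ioi (1:ℝ), ENNReal.ofReal ((A * α)⁻¹ * t ^ (1 - α)) := by
    apply setLIntegral_mono' measurableSet_Ioi
    intro t ht
    have ht1 : (1:ℝ) < t := ht
    have htpos : (0:ℝ) < t := lt_trans one_pos ht1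
    set K : ℝ := (A * α)⁻¹ * t ^ (1 - α) with hKdef
    have hK : 0 ≤ K := by positivity
    calc (∫⁻ r in Ioi t, ENNReal.ofReal ((r / t) * Real.exp (A * t ^ α - A * r ^ α)))
        ≤ ∫⁻ r in Ioi t, ENNReal.ofReal
            (K * (A * α * r ^ (α - 1) * Real.exp (A * t ^ α - A * r ^ α))) := by
          apply setLIntegral_mono' measurableSet_Ioi
          intro r hr
          have hrt : t < r := hr
          have hrpos : (0:ℝ) < r := lt_trans htpos hrt
          apply ENNReal.ofReal_le_ofReal
          have hKg : K * (A * α * r ^ (α - 1)) = t ^ (1 - α) * r ^ (α - 1) := by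
            rw [hKdef]
            field_simp
          have hmain : r / t ≤ t ^ (1 - α) * r ^ (α - 1) := by
            have h5 : t ^ (α - 2) ≤ r ^ (α - 2) :=
              Real.rpow_le_rpow htpos.le hrt.le (by linarith)
            have e_r : r ^ (α - 1) = r * r ^ (α - 2) := by
              rw [show α - 1 = 1 + (α - 2) by ring, Real.rpow_add hrpos, Real.rpow_one]
            have e_t : t ^ (1 - α) = (t * t ^ (α - 2))⁻¹ := by
              rw [show (1:ℝ) - α = -(1 + (α - 2)) by ring, Real.rpow_neg htpos.le,
                Real.rpow_add htpos, Real.rpow_one]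
            have htt : (0:ℝ) < t * t ^ (α - 2) :=
              mul_pos htpos (Real.rpow_pos_of_pos htpos _)
            rw [e_r, e_t, ← div_eq_inv_mul, div_le_div_iff₀ htpos htt]
            have := mul_le_mul_of_nonneg_left h5 hrpos.le
            nlinarith [Real.rpow_pos_of_pos htpos (α - 2)]
          calc (r / t) * Real.exp (A * t ^ α - A * r ^ α)
              ≤ (t ^ (1 - α) * r ^ (α - 1)) * Real.exp (A * t ^ α - A * r ^ α) :=
                mul_le_mul_of_nonneg_right hmain (Real.exp_pos _).le
            _ = K * (A * α * r ^ (α - 1) * Real.exp (A * t ^ α - A * r ^ α)) := by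
                rw [← hKg]; ring
      _ = ENNReal.ofReal K * ∫⁻ r in Ioi t,
            ENNReal.ofReal (A * α * r ^ (α - 1) * Real.exp (A * t ^ α - A * r ^ α)) := by
          simp_rw [ENNReal.ofReal_mul hK]
          exact lintegral_const_mul' _ _ ENNReal.ofReal_ne_top
      _ = ENNReal.ofReal ((A * α)⁻¹ * t ^ (1 - α)) := by
          rw [aux_inner α A t hα0 hA htpos, mul_one]
  -- Step 2: the bounding integral is finite
  have hint2 : IntegrableOn (fun t : ℝ => (A * α)⁻¹ * t ^ (1 - α)) (Ioi 1) :=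
    (integrableOn_Ioi_rpow_of_lt (by linarith) one_pos).const_mul _
  exact lt_of_le_of_lt step1 hint2.lintegral_lt_top
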